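/- Let C be a category with binary copowers (all coproducts A + A exist and C has an initial object 0). If every object A of C carries a counital comagma structure (δ_A : A → A + A, ε_A : A → 0) natural in A (i.e. δ_B ∘ f = (f + f) ∘ δ_A and ε_B ∘ f = ε_A for all f : A → B), then C is semi-additive. -/

import Mathlib

open CategoryTheory CategoryTheory.Limits

universe v u

/-- A semi-additive structure on a category `C`: a commutative monoid structure on each
hom-set, preserved by composition on either side (composition is bilinear). -/
structure SemiAdditive (C : Type u) [Category.{v} C] where
  add : ∀ {A B : C}, (A ⟶ B) → (A ⟶ B) → (A ⟶ B)
  zero : ∀ {A B : C}, A ⟶ B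
  add_assoc : ∀ {A B : C} (f g h : A ⟶ B), add (add f g) h = add f (add g h)
  add_comm : ∀ {A B : C} (f g : A ⟶ B), add f g = add g f
  zero_add : ∀ {A B : C} (f : A ⟶ B), add zero f = f
  comp_add : ∀ {A B D : C} (f : A ⟶ B) (g h : B ⟶ D), f ≫ add g h = add (f ≫ g) (f ≫ h)
  add_comp : ∀ {A B D : C} (f g : A ⟶ B) (h : B ⟶ D), add f g ≫ h = add (f ≫ h) (g ≫ h)
  comp_zero : ∀ {A B D : C} (f : A ⟶ B), f ≫ (zero : B ⟶ D) = (zero : A ⟶ D)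
  zero_comp : ∀ {A B D : C} (f : B ⟶ D), (zero : A ⟶ B) ≫ f = (zero : A ⟶ D)

/-- Let `C` be a category with binary copowers: an initial object `O` and, for each `A`,
a coproduct `cp A = A + A` with injections `i₁ A, i₂ A`.  If every object `A` carries a
counital comagma structure `(δ A : A ⟶ A + A, ε A : A ⟶ O)` natural in `A` — i.e.
composing `δ A` with the map `A + A ⟶ A` whose first (resp. second) component is `ε A`
followed by the unique map `O ⟶ A` and whose other component is the identity gives `𝟙 A`,
and `δ B ∘ f = (f + f) ∘ δ A`, `ε B ∘ f = ε A` for every `f : A ⟶ B` — then `C` is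
semi-additive. -/
theorem semiAdditive_of_natural_comagma {C : Type u} [Category.{v} C]
    (O : C) (hO : IsInitial O)
    (cp : C → C) (i₁ i₂ : ∀ A : C, A ⟶ cp A)
    (hc : ∀ A : C, IsColimit (BinaryCofan.mk (i₁ A) (i₂ A)))
    (δ : ∀ A : C, A ⟶ cp A) (ε : ∀ A : C, A ⟶ O)
    (hcounit₁ : ∀ A : C, δ A ≫ (hc A).desc (BinaryCofan.mk (ε A ≫ hO.to A) (𝟙 A)) = 𝟙 A)
    (hcounit₂ : ∀ A : C, δ A ≫ (hc A).desc (BinaryCofan.mk (𝟙 A) (ε A ≫ hO.to A)) = 𝟙 A)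
    (hδnat : ∀ {A B : C} (f : A ⟶ B),
      f ≫ δ B = δ A ≫ (hc A).desc (BinaryCofan.mk (f ≫ i₁ B) (f ≫ i₂ B)))
    (hεnat : ∀ {A B : C} (f : A ⟶ B), f ≫ ε B = ε A) :
    Nonempty (SemiAdditive C) := by
  classical
  -- componentwise description map
  let d : ∀ {A B : C}, (A ⟶ B) → (A ⟶ B) → (cp A ⟶ B) :=
    fun {A B} f g => (hc A).desc (BinaryCofan.mk f g)
  have fac₁ : ∀ {A B : C} (f g : A ⟶ B), i₁ A ≫ d f g = f := by
    intro A B f g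
    have h := (hc A).fac (BinaryCofan.mk f g) ⟨WalkingPair.left⟩
    simp at h
    exact h
  have fac₂ : ∀ {A B : C} (f g : A ⟶ B), i₂ A ≫ d f g = g := by
    intro A B f g
    have h := (hc A).fac (BinaryCofan.mk f g) ⟨WalkingPair.right⟩
    simp at h
    exact h
  have dext : ∀ {A B : C} (u v : cp A ⟶ B),
      i₁ A ≫ u = i₁ A ≫ v → i₂ A ≫ u = i₂ A ≫ v → u = v := by
    intro A B u v h1 h2
    apply (hc A).hom_ext
    rintro ⟨⟨⟩⟩ <;> simpa using (by assumption)
  have dcomp : ∀ {A B D : C} (f g : A ⟶ B) (h : B ⟶ D),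
      d f g ≫ h = d (f ≫ h) (g ≫ h) := by
    intro A B D f g h
    apply dext
    · rw [← Category.assoc, fac₁, fac₁]
    · rw [← Category.assoc, fac₂, fac₂]
  -- the addition and zero
  let add : ∀ {A B : C}, (A ⟶ B) → (A ⟶ B) → (A ⟶ B) := fun {A B} f g => δ A ≫ d f g
  let zero : ∀ {A B : C}, A ⟶ B := fun {A B} => ε A ≫ hO.to B
  have comp_add : ∀ {A B D : C} (f : A ⟶ B) (g h : B ⟶ D),
      f ≫ add g h = add (f ≫ g) (f ≫ h) := by
    intro A B D f g h
    show f ≫ δ B ≫ d g h = δ A ≫ d (f ≫ g) (f ≫ h)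
    rw [← Category.assoc, hδnat f]
    refine (Category.assoc _ _ _).trans ?_
    congr 1
    show d (f ≫ i₁ B) (f ≫ i₂ B) ≫ d g h = _
    rw [dcomp]
    congr 1 <;> rw [Category.assoc]
    · rw [fac₁]
    · rw [fac₂]
  have add_comp : ∀ {A B D : C} (f g : A ⟶ B) (h : B ⟶ D),
      add f g ≫ h = add (f ≫ h) (g ≫ h) := by
    intro A B D f g h
    show (δ A ≫ d f g) ≫ h = δ A ≫ d (f ≫ h) (g ≫ h)
    rw [Category.assoc, dcomp]
  have zero_add : ∀ {A B : C} (f : A ⟶ B), add zero f = f := by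
    intro A B f
    show δ A ≫ d (ε A ≫ hO.to B) f = f
    have h1 : (ε A ≫ hO.to B : A ⟶ B) = (ε A ≫ hO.to A) ≫ f := by
      rw [Category.assoc]
      congr 1
      exact hO.hom_ext _ _
    rw [h1]
    have h2 : d ((ε A ≫ hO.to A) ≫ f) f = d (ε A ≫ hO.to A) (𝟙 A) ≫ f := by
      rw [dcomp, Category.id_comp]
    rw [h2, ← Category.assoc]
    show (δ A ≫ d (ε A ≫ hO.to A) (𝟙 A)) ≫ f = f
    have : δ A ≫ d (ε A ≫ hO.to A) (𝟙 A) = 𝟙 A := hcounit₁ A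
    rw [this, Category.id_comp]
  have add_zero : ∀ {A B : C} (f : A ⟶ B), add f zero = f := by
    intro A B f
    show δ A ≫ d f (ε A ≫ hO.to B) = f
    have h1 : (ε A ≫ hO.to B : A ⟶ B) = (ε A ≫ hO.to A) ≫ f := by
      rw [Category.assoc]
      congr 1
      exact hO.hom_ext _ _
    rw [h1]
    have h2 : d f ((ε A ≫ hO.to A) ≫ f) = d (𝟙 A) (ε A ≫ hO.to A) ≫ f := by
      rw [dcomp, Category.id_comp]
    rw [h2, ← Category.assoc]
    have : δ A ≫ d (𝟙 A) (ε A ≫ hO.to A) = 𝟙 A := hcounit₂ A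
    rw [this, Category.id_comp]
  -- interchange law
  have interchange : ∀ {A B : C} (w x y z : A ⟶ B),
      add (add w x) (add y z) = add (add w y) (add x z) := by
    intro A B w x y z
    have hS : (δ (cp A) ≫ d (d w y) (d x z) : cp A ⟶ B) = d (add w x) (add y z) := by
      apply dext
      · show i₁ A ≫ add (d w y) (d x z) = i₁ A ≫ d (add w x) (add y z)
        rw [comp_add, fac₁, fac₁, fac₁]
      · show i₂ A ≫ add (d w y) (d x z) = i₂ A ≫ d (add w x) (add y z)
        rw [comp_add, fac₂, fac₂, fac₂]
    have h1 : add (add w x) (add y z) = δ A ≫ δ (cp A) ≫ d (d w y) (d x z) := by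
      show _ = δ A ≫ _
      rw [hS]
    have h2 : δ A ≫ δ (cp A) ≫ d (d w y) (d x z) = add (add w y) (add x z) := by
      show δ A ≫ add (d w y) (d x z) = _
      rw [comp_add]
    rw [h1, h2]
  have add_comm : ∀ {A B : C} (f g : A ⟶ B), add f g = add g f := by
    intro A B f g
    calc add f g = add (add zero f) (add g zero) := by rw [zero_add, add_zero]
    _ = add (add zero g) (add f zero) := interchange _ _ _ _
    _ = add g f := by rw [zero_add, add_zero]
  have add_assoc : ∀ {A B : C} (f g h : A ⟶ B), add (add f g) h = add f (add g h) := by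
    intro A B f g h
    calc add (add f g) h = add (add f g) (add zero h) := by rw [zero_add]
    _ = add (add f zero) (add g h) := interchange _ _ _ _
    _ = add f (add g h) := by rw [add_zero]
  refine ⟨⟨fun f g => add f g, zero, add_assoc, add_comm, zero_add, comp_add, add_comp,
    ?_, ?_⟩⟩
  · intro A B D f
    show f ≫ ε B ≫ hO.to D = ε A ≫ hO.to D
    rw [← Category.assoc, hεnat f]
  · intro A B D f
    show (ε A ≫ hO.to B) ≫ f = ε A ≫ hO.to D
    rw [Category.assoc]
    congr 1
    exact hO.hom_ext _ _
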